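/- The set H := {p ∈ FU^∞(s) ∩ δF : every A ∈ p is s-meshed} is a closed subsemigroup of δF: it is nonempty, closed, and p·q ∈ H for p,q ∈ H. -/

import Mathlib

open Finset

/-- `FU t` : the set of finite unions of an infinite sequence `t` in `F`. -/
def FU (t : ℕ → Finset ℕ) : Set (Finset ℕ) :=
  {x | ∃ v : Finset ℕ, v.Nonempty ∧ x = v.biUnion t}

/-- a sequence of nonempty pairwise disjoint finite sets. -/
def IsDisjointSeq (t : ℕ → Finset ℕ) : Prop :=
  (∀ i, (t i).Nonempty) ∧ Pairwise (Function.onFun Disjoint t)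

/-- `ordLT s t` : `max s < min t`, i.e. every element of `s` is below every element of `t`. -/
def ordLT (s t : Finset ℕ) : Prop := ∀ a ∈ s, ∀ b ∈ t, a < b

/-- two sets mesh if neither lies entirely below the other. -/
def Mesh (s t : Finset ℕ) : Prop := ¬ ordLT s t ∧ ¬ ordLT t s

/-- finite unions of a finite sequence. -/
def FUfin {n : ℕ} (t : Fin n → Finset ℕ) : Set (Finset ℕ) :=
  {x | ∃ v : Finset (Fin n), v.Nonempty ∧ x = v.biUnion t}

/-- the meshing graph of `t` w.r.t. `s` is complete: any two distinct members of `t`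
contain members of `s` which mesh. -/
def CompleteMesh (s : ℕ → Finset ℕ) {n : ℕ} (t : Fin n → Finset ℕ) : Prop :=
  ∀ i j : Fin n, i ≠ j → ∃ m k, s m ⊆ t i ∧ s k ⊆ t j ∧ Mesh (s m) (s k)

/-- `A` is `s`-meshed: for every `n` there is an `n`-witness, i.e. a disjoint sequence of
length `n` whose FU-set lies in `FU s ∩ A` and whose meshing graph is complete. -/
def SMeshed (s : ℕ → Finset ℕ) (A : Set (Finset ℕ)) : Prop :=
  ∀ n : ℕ, ∃ t : Fin n → Finset ℕ, (∀ i, (t i).Nonempty) ∧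
    Pairwise (Function.onFun Disjoint t) ∧ FUfin t ⊆ FU s ∩ A ∧ CompleteMesh s t

/-- the product of ultrafilters on `F` extending (disjoint) union:
`A ∈ p·q ↔ {v : {w : v ∪ w ∈ A} ∈ q} ∈ p`. -/
def uMul (p q : Ultrafilter (Finset ℕ)) : Ultrafilter (Finset ℕ) :=
  p.bind fun v => q.map fun w => v ∪ w

/-- `δF` : ultrafilters concentrating on nonempty sets and containing every
`σ(v) = {w : v ∩ w = ∅}`. -/
def deltaF : Set (Ultrafilter (Finset ℕ)) :=
  {p | {w : Finset ℕ | w.Nonempty} ∈ p ∧ ∀ v : Finset ℕ, {w | Disjoint v w} ∈ p}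

/-- `H = {p ∈ FU^∞(s) ∩ δF : every member of p is s-meshed}`. -/
def Hset (s : ℕ → Finset ℕ) : Set (Ultrafilter (Finset ℕ)) :=
  {p | p ∈ deltaF ∧ (∀ k, FU (fun n => s (n + k)) ∈ p) ∧ ∀ A ∈ p, SMeshed s A}

open Finset

/-- binary support of a natural number. -/
def bsupp (x : ℕ) : Finset ℕ := (Finset.range x).filter (fun i => x.testBit i)

lemma mem_bsupp {x i : ℕ} : i ∈ bsupp x ↔ x.testBit i = true := by
  simp only [bsupp, Finset.mem_filter, Finset.mem_range, and_iff_right_iff_imp]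
  intro h
  exact lt_of_lt_of_le (Nat.lt_two_pow_self (n := i)) (Nat.ge_two_pow_of_testBit h)

lemma bsupp_nonempty {x : ℕ} (hx : 0 < x) : (bsupp x).Nonempty := by
  rw [Finset.nonempty_iff_ne_empty]
  intro h
  refine absurd (Nat.zero_of_testBit_eq_false (n := x) fun i => ?_) (by omega)
  by_contra hb
  have : i ∈ bsupp x := mem_bsupp.mpr (by revert hb; cases x.testBit i <;> simp)
  simp [h] at this

lemma bsupp_upper {x i : ℕ} (h : i ∈ bsupp x) : i < x :=
  Finset.mem_range.mp (Finset.mem_filter.mp h).1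

lemma bsupp_lower {x m i : ℕ} (hdvd : 2 ^ m ∣ x) (hi : i ∈ bsupp x) : m ≤ i := by
  obtain ⟨z, rfl⟩ := hdvd
  by_contra h
  have := mem_bsupp.mp hi
  rw [Nat.testBit_two_pow_mul] at this
  simp [Nat.not_le_of_lt (by omega : i < m)] at this

lemma bsupp_add {x y m : ℕ} (hx : x < 2 ^ m) (hy : 2 ^ m ∣ y) :
    bsupp (x + y) = bsupp x ∪ bsupp y := by
  obtain ⟨z, rfl⟩ := hy
  ext i
  simp only [Finset.mem_union, mem_bsupp]
  rw [add_comm, Nat.testBit_two_pow_mul_add _ hx, Nat.testBit_two_pow_mul]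
  by_cases h : i < m
  · simp [h, Nat.not_le_of_lt h]
  · push_neg at h
    rw [if_neg (by omega)]
    simp [h, Nat.testBit_lt_two_pow (lt_of_lt_of_le hx (Nat.pow_le_pow_right two_pos h))]
lemma FS_pos {x : ℕ} {a : Stream' ℕ} (hx : x ∈ Hindman.FS a) : (∀ i, 0 < a.get i) → 0 < x := by
  induction hx with
  | head' a => exact fun ha => ha 0
  | tail' a m h ih => exact fun ha => ih fun i => ha (i + 1)
  | cons' a m h ih => exact fun ha => Nat.add_pos_left (ha 0) m

/-- The finite unions theorem (Folkman–Rado–Sanders), derived from Hindman's theorem. -/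
theorem folkman (c : Finset ℕ → Bool) (n : ℕ) :
    ∃ (V : Fin n → Finset ℕ) (ε : Bool), (∀ k, (V k).Nonempty) ∧
      Pairwise (Function.onFun Disjoint V) ∧
      ∀ W : Finset (Fin n), W.Nonempty → c (W.biUnion V) = ε := by
  classical
  obtain ⟨cell, hcell, b, hFSb⟩ :=
    Hindman.FS_partition_regular (fun i => 2 ^ i : Stream' ℕ)
      {{x | 0 < x ∧ c (bsupp x) = true}, {x | 0 < x ∧ c (bsupp x) = false}}
      ((Set.finite_singleton _).insert _)
      (by
        intro x hx
        have hpos : 0 < x := FS_pos hx (fun i => Nat.two_pow_pos i)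
        rcases Bool.eq_false_or_eq_true (c (bsupp x)) with h | h
        · exact Set.mem_sUnion.mpr ⟨_, Or.inl rfl, hpos, h⟩
        · exact Set.mem_sUnion.mpr ⟨_, Or.inr rfl, hpos, h⟩)
  obtain ⟨ε, hεcell⟩ : ∃ ε : Bool, cell = {x | 0 < x ∧ c (bsupp x) = ε} := by
    rcases hcell with h | h
    · exact ⟨true, h⟩
    · exact ⟨false, by simpa using h⟩
  subst hεcell
  have hb : ∀ i, 0 < b i := fun i => (hFSb (Hindman.FS.singleton b i)).1
  have step : ∀ i0 m : ℕ, ∃ X : Finset ℕ, X.Nonempty ∧ (∀ x ∈ X, i0 ≤ x) ∧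
      2 ^ m ∣ ∑ x ∈ X, b x := by
    intro i0 m
    have hinf : ∃ r, {i | i0 ≤ i ∧ b i % 2 ^ m = r}.Infinite := by
      by_contra hfin
      push_neg at hfin
      have hsub : Set.Ici i0 ⊆ ⋃ r ∈ Finset.range (2 ^ m), {i | i0 ≤ i ∧ b i % 2 ^ m = r} := by
        intro i hi
        simp only [Set.mem_iUnion, exists_prop]
        exact ⟨b i % 2 ^ m, Finset.mem_range.mpr (Nat.mod_lt _ (Nat.two_pow_pos m)), hi, rfl⟩
      exact (Set.Ici_infinite i0) ((Set.Finite.biUnion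
        (Finset.range (2 ^ m)).finite_toSet (fun r _ => hfin r)).subset hsub)
    obtain ⟨r, hr⟩ := hinf
    obtain ⟨X, hXsub, hXcard⟩ := hr.exists_subset_card_eq (2 ^ m)
    refine ⟨X, Finset.card_pos.mp (by rw [hXcard]; positivity),
      fun x hx => (hXsub hx).1, ?_⟩
    apply Nat.dvd_of_mod_eq_zero
    rw [Finset.sum_nat_mod X (2 ^ m) (fun x => b x), Finset.sum_congr rfl (fun x hx => (hXsub hx).2),
      Finset.sum_const, smul_eq_mul, hXcard]
    simp [Nat.mul_mod_left, Nat.mul_mod_right]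
  let pick : ℕ → ℕ → Finset ℕ := fun i0 m => (step i0 m).choose
  have hpick : ∀ i0 m, (pick i0 m).Nonempty ∧ (∀ x ∈ pick i0 m, i0 ≤ x) ∧
      2 ^ m ∣ ∑ x ∈ pick i0 m, b x := fun i0 m => (step i0 m).choose_spec
  let st : ℕ → ℕ × ℕ := fun k => Nat.rec ((0, 0) : ℕ × ℕ)
    (fun _ pr => ((pick pr.1 pr.2).max' (hpick pr.1 pr.2).1 + 1,
      ∑ x ∈ pick pr.1 pr.2, b x)) k
  let X : ℕ → Finset ℕ := fun k => pick (st k).1 (st k).2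
  let u : ℕ → ℕ := fun k => ∑ x ∈ X k, b x
  have hst : ∀ k, st (k + 1) = ((X k).max' (hpick _ _).1 + 1, u k) := fun k => rfl
  have hXne : ∀ k, (X k).Nonempty := fun k => (hpick _ _).1
  have hXlb : ∀ k, ∀ x ∈ X k, (st k).1 ≤ x := fun k => (hpick _ _).2.1
  have hdvd : ∀ k, 2 ^ (st k).2 ∣ u k := fun k => (hpick _ _).2.2
  have hupos : ∀ k, 0 < u k := fun k => Finset.sum_pos (fun x _ => hb x) (hXne k)
  have hm1 : ∀ k, (st (k + 1)).2 = u k := fun k => by rw [hst k]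
  have hmlt : ∀ k, (st k).2 < (st (k + 1)).2 := by
    intro k
    rw [hm1]
    exact lt_of_lt_of_le Nat.lt_two_pow_self (Nat.le_of_dvd (hupos k) (hdvd k))
  have hmmono : StrictMono fun k => (st k).2 := strictMono_nat_of_lt_succ hmlt
  have hilt : ∀ k, (st k).1 < (st (k + 1)).1 := by
    intro k
    rw [hst k]
    obtain ⟨x, hx⟩ := hXne k
    exact Nat.lt_succ_of_le (le_trans (hXlb k x hx) (Finset.le_max' _ _ hx))
  have himono : StrictMono fun k => (st k).1 := strictMono_nat_of_lt_succ hilt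
  have hsep : ∀ k l : ℕ, k < l → ∀ x ∈ X k, ∀ y ∈ X l, x < y := by
    intro k l hkl x hx y hy
    have h1 : x < (st (k + 1)).1 := by
      rw [hst k]; exact Nat.lt_succ_of_le (Finset.le_max' _ _ hx)
    have h2 : (st (k + 1)).1 ≤ (st l).1 := himono.monotone hkl
    exact lt_of_lt_of_le h1 (le_trans h2 (hXlb l y hy))
  have hXdisj : ∀ k l : ℕ, k ≠ l → Disjoint (X k) (X l) := by
    intro k l hkl
    rcases hkl.lt_or_gt with h | h
    · exact Finset.disjoint_left.mpr fun x hx hx' => absurd (hsep k l h x hx x hx') (lt_irrefl x)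
    · exact Finset.disjoint_left.mpr fun x hx hx' => absurd (hsep l k h x hx' x hx) (lt_irrefl x)
  have hsupp_lb : ∀ k, ∀ i ∈ bsupp (u k), (st k).2 ≤ i := fun k i hi => bsupp_lower (hdvd k) hi
  have hsupp_ub : ∀ k, ∀ i ∈ bsupp (u k), i < (st (k + 1)).2 := by
    intro k i hi; rw [hm1]; exact bsupp_upper hi
  have dvd_sum : ∀ (W : Finset ℕ) (k0 : ℕ), (∀ k ∈ W, k0 ≤ k) →
      2 ^ (st k0).2 ∣ ∑ k ∈ W, u k := fun W k0 h =>
    Finset.dvd_sum fun k hk =>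
      dvd_trans (pow_dvd_pow 2 (hmmono.monotone (h k hk))) (hdvd k)
  have key : ∀ (N : ℕ) (W : Finset ℕ), W.card ≤ N → W.Nonempty →
      bsupp (∑ k ∈ W, u k) = W.biUnion fun k => bsupp (u k) := by
    intro N
    induction N with
    | zero => exact fun W hcard hW => absurd (Finset.card_pos.mpr hW) (by omega)
    | succ N ih =>
      intro W hcard hW
      have hk0W : W.min' hW ∈ W := W.min'_mem hW
      set k0 := W.min' hW with hk0
      have hcardR : (W.erase k0).card ≤ N := by
        have := Finset.card_erase_of_mem hk0W
        omega
      rw [← Finset.insert_erase hk0W, Finset.sum_insert (Finset.notMem_erase _ _),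
        Finset.biUnion_insert]
      rcases (W.erase k0).eq_empty_or_nonempty with hR | hR
      · simp [hR]
      · have hRlb : ∀ k ∈ W.erase k0, k0 + 1 ≤ k := by
          intro k hk
          have h1 := Finset.min'_le W k (Finset.mem_of_mem_erase hk)
          have h2 := (Finset.mem_erase.mp hk).1
          omega
        have hdvdR : 2 ^ (u k0) ∣ ∑ k ∈ W.erase k0, u k := by
          have := dvd_sum (W.erase k0) (k0 + 1) hRlb
          rwa [hm1] at this
        rw [bsupp_add Nat.lt_two_pow_self hdvdR, ih _ hcardR hR]
  refine ⟨fun k => bsupp (u (k : ℕ)), ε, fun k => bsupp_nonempty (hupos _), ?_, ?_⟩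
  · have aux : ∀ k l : ℕ, k < l → Disjoint (bsupp (u k)) (bsupp (u l)) := by
      intro k l hkl
      rw [Finset.disjoint_left]
      intro i hik hil
      have h1 : i < (st (k + 1)).2 := hsupp_ub k i hik
      have h2 : (st l).2 ≤ i := hsupp_lb l i hil
      have h3 : (st (k + 1)).2 ≤ (st l).2 := hmmono.monotone hkl
      omega
    intro k l hkl
    have hv : (k : ℕ) ≠ (l : ℕ) := fun h => hkl (Fin.ext h)
    rcases hv.lt_or_gt with h | h
    · exact aux _ _ h
    · exact (aux _ _ h).symm
  · intro W hW
    set W' := W.image (fun k : Fin n => (k : ℕ)) with hW'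
    have hWne : W'.Nonempty := hW.image _
    have him : W.biUnion (fun k => bsupp (u (k : ℕ))) = W'.biUnion fun k => bsupp (u k) := by
      rw [hW', Finset.image_biUnion]
    have hdisW : (↑W' : Set ℕ).PairwiseDisjoint X := fun a _ b' _ hab => hXdisj a b' hab
    have hsum2 : ∑ k ∈ W', u k = ∑ x ∈ W'.biUnion X, b x := (Finset.sum_biUnion hdisW).symm
    have hbne : (W'.biUnion X).Nonempty := by
      obtain ⟨a, ha⟩ := hWne
      obtain ⟨x, hx⟩ := hXne a
      exact ⟨x, Finset.mem_biUnion.mpr ⟨a, ha, hx⟩⟩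
    have hmem : (∑ k ∈ W', u k) ∈ Hindman.FS b := by
      rw [hsum2]
      exact Hindman.FS.finset_sum b _ hbne
    have hc := (hFSb hmem).2
    rw [him, ← key W'.card W' le_rfl hWne]
    exact hc
lemma biUnion_union' (v w : Finset ℕ) (t : ℕ → Finset ℕ) :
    (v ∪ w).biUnion t = v.biUnion t ∪ w.biUnion t := by
  ext a
  simp only [Finset.mem_biUnion, Finset.mem_union]
  constructor
  · rintro ⟨i, hi | hi, ha⟩
    · exact Or.inl ⟨i, hi, ha⟩
    · exact Or.inr ⟨i, hi, ha⟩
  · rintro (⟨i, hi, ha⟩ | ⟨i, hi, ha⟩)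
    · exact ⟨i, Or.inl hi, ha⟩
    · exact ⟨i, Or.inr hi, ha⟩

lemma FU_union {t : ℕ → Finset ℕ} {x y : Finset ℕ} (hx : x ∈ FU t) (hy : y ∈ FU t) :
    x ∪ y ∈ FU t := by
  obtain ⟨v, hv, rfl⟩ := hx
  obtain ⟨w, hw, rfl⟩ := hy
  exact ⟨v ∪ w, hv.mono Finset.subset_union_left, (biUnion_union' v w t).symm⟩

lemma smeshed_mono {s : ℕ → Finset ℕ} {A B : Set (Finset ℕ)} (hAB : A ⊆ B)
    (h : SMeshed s A) : SMeshed s B := fun n =>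
  let ⟨t, h1, h2, h3, h4⟩ := h n
  ⟨t, h1, h2, fun x hx => ⟨(h3 hx).1, hAB (h3 hx).2⟩, h4⟩

lemma smeshed_univ {s : ℕ → Finset ℕ} (hs : IsDisjointSeq s)
    (harb : ∀ n : ℕ, ∃ i : Fin n → ℕ, StrictMono i ∧ CompleteMesh s (fun k => s (i k))) :
    SMeshed s Set.univ := by
  intro n
  obtain ⟨i, hmono, hmesh⟩ := harb n
  refine ⟨fun k => s (i k), fun k => hs.1 _, fun k l hkl => hs.2 (hmono.injective.ne hkl),
    ?_, hmesh⟩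
  rintro x ⟨v, hv, rfl⟩
  exact ⟨⟨v.image i, hv.image _, (Finset.image_biUnion).symm⟩, trivial⟩

lemma single_mem_FUfin {n : ℕ} (t : Fin n → Finset ℕ) (i : Fin n) : t i ∈ FUfin t :=
  ⟨{i}, Finset.singleton_nonempty i, (Finset.singleton_biUnion).symm⟩

lemma not_smeshed_empty (s : ℕ → Finset ℕ) : ¬ SMeshed s ∅ := by
  intro h
  obtain ⟨t, h1, h2, h3, h4⟩ := h 1
  exact (h3 (single_mem_FUfin t 0)).2

lemma not_smeshed_empty' (s : ℕ → Finset ℕ) : ¬ SMeshed s {w : Finset ℕ | w.Nonempty}ᶜ := by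
  intro h
  obtain ⟨t, h1, h2, h3, h4⟩ := h 1
  exact (h3 (single_mem_FUfin t 0)).2 (h1 0)

lemma not_smeshed_meets (s : ℕ → Finset ℕ) (v : Finset ℕ) :
    ¬ SMeshed s {w | Disjoint v w}ᶜ := by
  intro h
  obtain ⟨t, h1, h2, h3, h4⟩ := h (v.card + 1)
  have hmeet : ∀ k : Fin (v.card + 1), ∃ x, x ∈ v ∧ x ∈ t k := by
    intro k
    exact Finset.not_disjoint_iff.mp ((h3 (single_mem_FUfin t k)).2)
  choose f hf1 hf2 using hmeet
  obtain ⟨a, -, b, -, hab, hfab⟩ := Finset.exists_ne_map_eq_of_card_lt_of_maps_to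
    (t := v) (by simp) (fun a (_ : a ∈ (Finset.univ : Finset (Fin (v.card + 1)))) => hf1 a)
  exact Finset.disjoint_left.mp (h2 hab) (hf2 a) (hfab ▸ hf2 b)

lemma mem_FU_low {s : ℕ → Finset ℕ} (k : ℕ) {x : Finset ℕ} (hx : x ∈ FU s)
    (hnot : x ∉ FU (fun n => s (n + k))) : ∃ j, j < k ∧ s j ⊆ x := by
  obtain ⟨X, hX, rfl⟩ := hx
  by_cases hall : ∀ j ∈ X, k ≤ j
  · exact absurd ⟨X.image (· - k), hX.image _,
      by rw [Finset.image_biUnion]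
         exact (Finset.biUnion_congr rfl fun j hj => by
           rw [Nat.sub_add_cancel (hall j hj)]).symm⟩ hnot
  · push_neg at hall
    obtain ⟨j, hjX, hjk⟩ := hall
    exact ⟨j, hjk, Finset.subset_biUnion_of_mem s hjX⟩

lemma not_smeshed_FU_compl {s : ℕ → Finset ℕ} (hs : IsDisjointSeq s) (k : ℕ) :
    ¬ SMeshed s (FU (fun n => s (n + k)))ᶜ := by
  intro h
  obtain ⟨t, h1, h2, h3, h4⟩ := h (k + 1)
  have hj : ∀ i : Fin (k + 1), ∃ j, j < k ∧ s j ⊆ t i := by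
    intro i
    have hm := h3 (single_mem_FUfin t i)
    exact mem_FU_low k hm.1 hm.2
  choose f hf1 hf2 using hj
  obtain ⟨a, -, b, -, hab, hfab⟩ := Finset.exists_ne_map_eq_of_card_lt_of_maps_to
    (t := Finset.range k)
    (by simp)
    (fun a (_ : a ∈ (Finset.univ : Finset (Fin (k + 1)))) => Finset.mem_range.mpr (hf1 a))
  obtain ⟨x, hx⟩ := hs.1 (f a)
  exact Finset.disjoint_left.mp (h2 hab) (hf2 a hx) (hfab ▸ hf2 b <| hfab ▸ hx)
lemma biUnion_dite_mem_FUfin {N : ℕ} (t : Fin N → Finset ℕ) (V' : Finset ℕ)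
    (hne : V'.Nonempty) (hlt : ∀ j ∈ V', j < N) :
    V'.biUnion (fun j => if h : j < N then t ⟨j, h⟩ else ∅) ∈ FUfin t := by
  refine ⟨V'.attachFin hlt, ?_, ?_⟩
  · obtain ⟨j, hj⟩ := hne
    exact ⟨⟨j, hlt j hj⟩, (Finset.mem_attachFin hlt).mpr hj⟩
  · ext x
    simp only [Finset.mem_biUnion]
    constructor
    · rintro ⟨j, hj, hx⟩
      have hjN := hlt j hj
      rw [dif_pos hjN] at hx
      exact ⟨⟨j, hjN⟩, (Finset.mem_attachFin hlt).mpr hj, hx⟩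
    · rintro ⟨i, hi, hx⟩
      refine ⟨(i : ℕ), (Finset.mem_attachFin hlt).mp hi, ?_⟩
      rw [dif_pos i.isLt]
      exact hx

lemma condense {N n : ℕ} {s : ℕ → Finset ℕ} (t : Fin N → Finset ℕ)
    (ht1 : ∀ i, (t i).Nonempty) (ht2 : Pairwise (Function.onFun Disjoint t))
    (ht3 : FUfin t ⊆ FU s) (ht4 : CompleteMesh s t)
    (V : Fin n → Finset ℕ) (hVne : ∀ k, (V k).Nonempty)
    (hVdisj : Pairwise (Function.onFun Disjoint V))
    (hVlt : ∀ k, ∀ j ∈ V k, j < N)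
    (C : Set (Finset ℕ))
    (hC : ∀ W : Finset (Fin n), W.Nonempty →
      (W.biUnion V).biUnion (fun j => if h : j < N then t ⟨j, h⟩ else ∅) ∈ C) :
    ∃ t' : Fin n → Finset ℕ, (∀ i, (t' i).Nonempty) ∧
      Pairwise (Function.onFun Disjoint t') ∧ FUfin t' ⊆ FU s ∩ C ∧ CompleteMesh s t' := by
  classical
  set T : ℕ → Finset ℕ := fun j => if h : j < N then t ⟨j, h⟩ else ∅ with hT
  have hTval : ∀ (j : ℕ) (h : j < N), T j = t ⟨j, h⟩ := by
    intro j h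
    simp only [hT]
    rw [dif_pos h]
  have hTsub : ∀ (V' : Finset ℕ) (j : ℕ), j ∈ V' → T j ⊆ V'.biUnion T :=
    fun V' j hj => Finset.subset_biUnion_of_mem T hj
  refine ⟨fun k => (V k).biUnion T, ?_, ?_, ?_, ?_⟩
  · intro k
    obtain ⟨j, hj⟩ := hVne k
    have := hTsub (V k) j hj
    rw [hTval j (hVlt k j hj)] at this
    exact (ht1 _).mono this
  · intro k l hkl
    rw [Function.onFun, Finset.disjoint_left]
    rintro x hx hx'
    obtain ⟨j, hj, hxj⟩ := Finset.mem_biUnion.mp hx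
    obtain ⟨j', hj', hxj'⟩ := Finset.mem_biUnion.mp hx'
    have hjN := hVlt k j hj
    have hj'N := hVlt l j' hj'
    rw [hTval j hjN] at hxj
    rw [hTval j' hj'N] at hxj'
    have hne : j ≠ j' := fun h => Finset.disjoint_left.mp (hVdisj hkl) hj (h ▸ hj')
    have hfne : (⟨j, hjN⟩ : Fin N) ≠ ⟨j', hj'N⟩ := fun h => hne (congrArg Fin.val h)
    exact Finset.disjoint_left.mp (ht2 hfne) hxj hxj'
  · rintro x ⟨W, hW, rfl⟩
    rw [show W.biUnion (fun k => (V k).biUnion T) = (W.biUnion V).biUnion T from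
      (Finset.biUnion_biUnion W V T).symm]
    have hne : (W.biUnion V).Nonempty := by
      obtain ⟨k, hk⟩ := hW
      obtain ⟨j, hj⟩ := hVne k
      exact ⟨j, Finset.mem_biUnion.mpr ⟨k, hk, hj⟩⟩
    have hlt : ∀ j ∈ W.biUnion V, j < N := by
      intro j hj
      obtain ⟨k, _, hjk⟩ := Finset.mem_biUnion.mp hj
      exact hVlt k j hjk
    exact ⟨ht3 (biUnion_dite_mem_FUfin t _ hne hlt), hC W hW⟩
  · intro k l hkl
    obtain ⟨j, hj⟩ := hVne k
    obtain ⟨j', hj'⟩ := hVne l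
    have hjN := hVlt k j hj
    have hj'N := hVlt l j' hj'
    have hne : j ≠ j' := fun h => Finset.disjoint_left.mp (hVdisj hkl) hj (h ▸ hj')
    obtain ⟨m, m', hsm, hsm', hmesh⟩ :=
      ht4 ⟨j, hjN⟩ ⟨j', hj'N⟩ (fun h => hne (congrArg Fin.val h))
    refine ⟨m, m', subset_trans hsm ?_, subset_trans hsm' ?_, hmesh⟩
    · rw [← hTval j hjN]
      exact hTsub (V k) j hj
    · rw [← hTval j' hj'N]
      exact hTsub (V l) j' hj'

/-- Partition regularity of `s`-meshedness. -/
theorem smeshed_partition {s : ℕ → Finset ℕ} {A B : Set (Finset ℕ)}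
    (hAB : SMeshed s (A ∪ B)) : SMeshed s A ∨ SMeshed s B := by
  classical
  by_contra hcon
  push_neg at hcon
  obtain ⟨hA', hB'⟩ := hcon
  obtain ⟨nA, hA⟩ := not_forall.mp hA'
  obtain ⟨nB, hB⟩ := not_forall.mp hB'
  choose t ht1 ht2 ht3 ht4 using hAB
  set T : ℕ → ℕ → Finset ℕ := fun N j => if h : j < N then t N ⟨j, h⟩ else ∅ with hT
  set U := Filter.hyperfilter ℕ with hU
  set c : Finset ℕ → Bool := fun V => decide ({N | V.biUnion (T N) ∈ A} ∈ U) with hc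
  set n := max nA nB with hn
  obtain ⟨V, ε, hVne, hVdisj, hmono⟩ := folkman c n
  obtain ⟨m, hm⟩ : ∃ m, ∀ (k : Fin n), ∀ j ∈ V k, j < m := by
    refine ⟨(Finset.univ.biUnion V).sup id + 1, fun k j hj => ?_⟩
    have h1 : j ∈ Finset.univ.biUnion V := Finset.mem_biUnion.mpr ⟨k, Finset.mem_univ k, hj⟩
    have h2 := Finset.le_sup (f := id) h1
    simp only [id] at h2
    omega
  have hbig : ∀ (n' : ℕ) (e : Fin n' → Fin n), ∃ N, m < N ∧ ∀ W : Finset (Fin n'),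
      W.Nonempty → (((W.image e).biUnion V).biUnion (T N) ∈ A ↔ ε = true) := by
    intro n' e
    have hGmem : ∀ W : Finset (Fin n'),
        {N | W.Nonempty → (((W.image e).biUnion V).biUnion (T N) ∈ A ↔ ε = true)} ∈ U := by
      intro W
      by_cases hWne : W.Nonempty
      · have hdec := hmono (W.image e) (hWne.image e)
        simp only [hc] at hdec
        rcases Bool.eq_false_or_eq_true ε with hε | hε
        · rw [hε, decide_eq_true_eq] at hdec
          refine Filter.mem_of_superset hdec ?_
          intro N hN _
          exact iff_of_true hN hε
        · rw [hε, decide_eq_false_iff_not] at hdec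
          have hS : {N | ((W.image e).biUnion V).biUnion (T N) ∈ A}ᶜ ∈ U :=
            Ultrafilter.compl_mem_iff_notMem.mpr hdec
          refine Filter.mem_of_superset hS ?_
          intro N hN _
          exact iff_of_false hN (by simp [hε])
      · refine Filter.univ_mem' ?_
        intro N hwne
        exact absurd hwne hWne
    have hInt : ((⋂ W : Finset (Fin n'),
        {N | W.Nonempty → (((W.image e).biUnion V).biUnion (T N) ∈ A ↔ ε = true)}) ∩
        {N | m < N}) ∈ U := by
      refine Filter.inter_mem (Filter.iInter_mem.mpr hGmem)
        (Filter.mem_hyperfilter_of_finite_compl ?_)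
      have hcompl : {N : ℕ | m < N}ᶜ = {N | N ≤ m} := by ext N; simp
      rw [hcompl]
      exact Set.finite_le_nat m
    obtain ⟨N, hN⟩ := Filter.nonempty_of_mem hInt
    exact ⟨N, hN.2, fun W hW => (Set.mem_iInter.mp hN.1 W) hW⟩
  rcases Bool.eq_false_or_eq_true ε with hε | hε
  · -- ε = true : build a witness for A of length nA
    obtain ⟨N, hNm, hNA⟩ := hbig nA (Fin.castLE (le_max_left nA nB))
    refine hA (condense (t N) (ht1 N) (ht2 N) (fun x hx => (ht3 N hx).1) (ht4 N)
      (fun k => V (Fin.castLE (le_max_left nA nB) k)) (fun k => hVne _)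
      (fun k l hkl => hVdisj ((Fin.castLE_injective _).ne hkl))
      (fun k j hj => lt_trans (hm _ j hj) hNm) A ?_)
    intro W hW
    have heq : (W.biUnion fun k => V (Fin.castLE (le_max_left nA nB) k)) =
        (W.image (Fin.castLE (le_max_left nA nB))).biUnion V := by
      rw [Finset.image_biUnion]
    show (W.biUnion fun k => V (Fin.castLE (le_max_left nA nB) k)).biUnion (T N) ∈ A
    rw [heq]
    exact (hNA W hW).mpr hε
  · -- ε = false : build a witness for B of length nB
    obtain ⟨N, hNm, hNA⟩ := hbig nB (Fin.castLE (le_max_right nA nB))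
    refine hB (condense (t N) (ht1 N) (ht2 N) (fun x hx => (ht3 N hx).1) (ht4 N)
      (fun k => V (Fin.castLE (le_max_right nA nB) k)) (fun k => hVne _)
      (fun k l hkl => hVdisj ((Fin.castLE_injective _).ne hkl))
      (fun k j hj => lt_trans (hm _ j hj) hNm) B ?_)
    intro W hW
    have heq : (W.biUnion fun k => V (Fin.castLE (le_max_right nA nB) k)) =
        (W.image (Fin.castLE (le_max_right nA nB))).biUnion V := by
      rw [Finset.image_biUnion]
    have hne : ((W.image (Fin.castLE (le_max_right nA nB))).biUnion V).Nonempty := by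
      rw [← heq]
      obtain ⟨k, hk⟩ := hW
      obtain ⟨j, hj⟩ := hVne (Fin.castLE (le_max_right nA nB) k)
      exact ⟨j, Finset.mem_biUnion.mpr ⟨k, hk, hj⟩⟩
    have hlt : ∀ j ∈ (W.image (Fin.castLE (le_max_right nA nB))).biUnion V, j < N := by
      intro j hj
      obtain ⟨k, _, hjk⟩ := Finset.mem_biUnion.mp hj
      exact lt_trans (hm _ j hjk) hNm
    have hAB' := (ht3 N (biUnion_dite_mem_FUfin (t N) _ hne hlt)).2
    have hnotA : ((W.image (Fin.castLE (le_max_right nA nB))).biUnion V).biUnion (T N) ∉ A := by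
      intro hmem
      have h2 := (hNA W hW).mp hmem
      rw [hε] at h2
      exact Bool.false_ne_true h2
    show (W.biUnion fun k => V (Fin.castLE (le_max_right nA nB) k)).biUnion (T N) ∈ B
    rw [heq]
    exact hAB'.resolve_left hnotA
/-- The meshing semigroup: if `s` has arbitrarily large completely meshed finite
subsequences, then `H` is a nonempty closed subsemigroup of `δF`. -/
theorem Hset_closed_subsemigroup (s : ℕ → Finset ℕ) (hs : IsDisjointSeq s)
    (harb : ∀ n : ℕ, ∃ i : Fin n → ℕ, StrictMono i ∧ CompleteMesh s (fun k => s (i k))) :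
    (Hset s).Nonempty ∧ IsClosed (Hset s) ∧
      ∀ p ∈ Hset s, ∀ q ∈ Hset s, uMul p q ∈ Hset s := by
  classical
  have hUniv : SMeshed s Set.univ := smeshed_univ hs harb
  refine ⟨?_, ?_, ?_⟩
  · -- Nonempty
    let g : Filter (Finset ℕ) :=
      { sets := {A | ¬ SMeshed s Aᶜ}
        univ_sets := by simpa using not_smeshed_empty s
        sets_of_superset := fun hx hxy h =>
          hx (smeshed_mono (Set.compl_subset_compl.mpr hxy) h)
        inter_sets := by
          intro x y hx hy h
          rw [Set.compl_inter] at h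
          rcases smeshed_partition h with h' | h'
          exacts [hx h', hy h'] }
    have hg : ∀ A : Set (Finset ℕ), A ∈ g ↔ ¬ SMeshed s Aᶜ := fun A => Iff.rfl
    haveI hne : g.NeBot := by
      refine Filter.forall_mem_nonempty_iff_neBot.mp ?_
      intro A hA
      have hA' : ¬ SMeshed s Aᶜ := hA
      have hSA : SMeshed s A := by
        rcases smeshed_partition (s := s) (A := A) (B := Aᶜ)
          (by rw [Set.union_compl_self]; exact hUniv) with h | h
        · exact h
        · exact absurd h hA'
      obtain ⟨t, h1, h2, h3, h4⟩ := hSA 1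
      exact ⟨t 0, (h3 (single_mem_FUfin t 0)).2⟩
    have hof : ∀ A : Set (Finset ℕ), ¬ SMeshed s Aᶜ → A ∈ Ultrafilter.of g :=
      fun A hA => Ultrafilter.of_le g hA
    refine ⟨Ultrafilter.of g, ⟨?_, ?_⟩, ?_, ?_⟩
    · exact hof _ (not_smeshed_empty' s)
    · exact fun v => hof _ (not_smeshed_meets s v)
    · exact fun k => hof _ (not_smeshed_FU_compl hs k)
    · intro A hA
      by_contra hSA
      have hcm : Aᶜ ∈ Ultrafilter.of g := hof _ (by rwa [compl_compl])
      exact (Ultrafilter.compl_mem_iff_notMem.mp hcm) hA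
  · -- Closed
    have hrw : Hset s = ({p : Ultrafilter (Finset ℕ) | {w : Finset ℕ | w.Nonempty} ∈ p} ∩
        ⋂ v : Finset ℕ, {p : Ultrafilter (Finset ℕ) | {w | Disjoint v w} ∈ p}) ∩
        ((⋂ k : ℕ, {p : Ultrafilter (Finset ℕ) | FU (fun n => s (n + k)) ∈ p}) ∩
        ⋂ A ∈ {A : Set (Finset ℕ) | ¬ SMeshed s A},
          {p : Ultrafilter (Finset ℕ) | A ∈ p}ᶜ) := by
      ext p
      simp only [Hset, deltaF, Set.mem_setOf_eq, Set.mem_inter_iff, Set.mem_iInter,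
        Set.mem_compl_iff]
      constructor
      · rintro ⟨⟨h1, h2⟩, h3, h4⟩
        exact ⟨⟨h1, h2⟩, h3, fun A hA hAp => hA (h4 A hAp)⟩
      · rintro ⟨⟨h1, h2⟩, h3, h4⟩
        refine ⟨⟨h1, h2⟩, h3, fun A hAp => ?_⟩
        by_contra hSA
        exact h4 A hSA hAp
    rw [hrw]
    refine IsClosed.inter (IsClosed.inter (ultrafilter_isClosed_basic _)
        (isClosed_iInter fun v => ultrafilter_isClosed_basic _))
      (IsClosed.inter (isClosed_iInter fun k => ultrafilter_isClosed_basic _)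
        (isClosed_biInter fun A _ => (ultrafilter_isOpen_basic A).isClosed_compl))
  · -- Subsemigroup
    rintro p ⟨⟨hp1, hp2⟩, hp3, hp4⟩ q ⟨⟨hq1, hq2⟩, hq3, hq4⟩
    refine ⟨⟨?_, ?_⟩, ?_, ?_⟩
    · show {v : Finset ℕ | {w | (v ∪ w).Nonempty} ∈ q} ∈ p
      refine Filter.univ_mem' fun v => ?_
      exact Filter.mem_of_superset hq1 fun w hw => hw.mono Finset.subset_union_right
    · intro v
      show {u : Finset ℕ | {w | Disjoint v (u ∪ w)} ∈ q} ∈ p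
      refine Filter.mem_of_superset (hp2 v) fun u hu => ?_
      exact Filter.mem_of_superset (hq2 v) fun w hw =>
        Finset.disjoint_union_right.mpr ⟨hu, hw⟩
    · intro k
      show {v : Finset ℕ | {w | v ∪ w ∈ FU (fun n => s (n + k))} ∈ q} ∈ p
      refine Filter.mem_of_superset (hp3 k) fun v hv => ?_
      exact Filter.mem_of_superset (hq3 k) fun w hw => FU_union hv hw
    · intro A hA
      intro n
      have hB : {v : Finset ℕ | {w | v ∪ w ∈ A} ∈ q} ∈ p := hA
      obtain ⟨t, h1, h2, h3, h4⟩ := hp4 _ hB n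
      set D : Set (Finset ℕ) :=
        {w | ∀ Vf : Finset (Fin n), Vf.Nonempty → (Vf.biUnion t) ∪ w ∈ A} with hD'
      have hD : D ∈ q := by
        have hDeq : D = ⋂ Vf : Finset (Fin n),
            {w | Vf.Nonempty → (Vf.biUnion t) ∪ w ∈ A} := by
          ext w
          simp only [hD', Set.mem_setOf_eq, Set.mem_iInter]
        rw [hDeq]
        refine Filter.iInter_mem.mpr fun Vf => ?_
        by_cases hVf : Vf.Nonempty
        · have hmemB : {w | (Vf.biUnion t) ∪ w ∈ A} ∈ q := (h3 ⟨Vf, hVf, rfl⟩).2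
          exact Filter.mem_of_superset hmemB fun w hw _ => hw
        · exact Filter.univ_mem' fun w h => absurd h hVf
      have hD2 : (D ∩ {w | Disjoint (Finset.univ.biUnion t) w}) ∈ q :=
        Filter.inter_mem hD (hq2 _)
      obtain ⟨u, hu1, hu2, hu3, hu4⟩ := hq4 _ hD2 n
      have htu : ∀ i j : Fin n, Disjoint (t i) (u j) := by
        intro i j
        have hj := (hu3 (single_mem_FUfin u j)).2
        exact hj.2.mono_left (Finset.subset_biUnion_of_mem t (Finset.mem_univ i))
      refine ⟨fun i => t i ∪ u i, fun i => (h1 i).mono Finset.subset_union_left, ?_, ?_, ?_⟩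
      · intro i j hij
        exact Finset.disjoint_union_left.mpr
          ⟨Finset.disjoint_union_right.mpr ⟨h2 hij, htu i j⟩,
           Finset.disjoint_union_right.mpr ⟨(htu j i).symm, hu2 hij⟩⟩
      · rintro x ⟨Vf, hVf, rfl⟩
        have hsplit : Vf.biUnion (fun i => t i ∪ u i) = Vf.biUnion t ∪ Vf.biUnion u := by
          ext a
          simp only [Finset.mem_biUnion, Finset.mem_union]
          constructor
          · rintro ⟨i, hi, ha | ha⟩
            · exact Or.inl ⟨i, hi, ha⟩
            · exact Or.inr ⟨i, hi, ha⟩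
          · rintro (⟨i, hi, ha⟩ | ⟨i, hi, ha⟩)
            · exact ⟨i, hi, Or.inl ha⟩
            · exact ⟨i, hi, Or.inr ha⟩
        rw [hsplit]
        have hmu := hu3 ⟨Vf, hVf, rfl⟩
        have hmt := h3 ⟨Vf, hVf, rfl⟩
        exact ⟨FU_union hmt.1 hmu.1, hmu.2.1 Vf hVf⟩
      · intro i j hij
        obtain ⟨m, m', hm, hm', hmesh⟩ := h4 i j hij
        exact ⟨m, m', hm.trans Finset.subset_union_left,
          hm'.trans Finset.subset_union_left, hmesh⟩
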